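/- In the positive braid monoid B_n⁺ (n ≥ 3), every positive braid x admits a unique decomposition x = Φ_n^{p-1}(x_p)···Φ_n(x₂)·x₁ with x₁, ..., x_p in B_{n-1}⁺, x_p ≠ 1, such that for each r ≥ 2 the only generator σ_i that right-divides Φ_n^{p-r}(x_p)···Φ_n(x_{r+1})·x_r is σ₁. -/

import Mathlib

/-- The braid relations on the free monoid over `Fin N`
(generator `i : Fin N` stands for `σ_{i+1}`). -/
def braidRel (N : ℕ) : FreeMonoid (Fin N) → FreeMonoid (Fin N) → Prop := fun a b =>
  (∃ i j : Fin N, ((i : ℕ) + 2 ≤ (j : ℕ) ∨ (j : ℕ) + 2 ≤ (i : ℕ)) ∧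
      a = FreeMonoid.of i * FreeMonoid.of j ∧ b = FreeMonoid.of j * FreeMonoid.of i) ∨
  (∃ i j : Fin N, ((i : ℕ) + 1 = (j : ℕ) ∨ (j : ℕ) + 1 = (i : ℕ)) ∧
      a = FreeMonoid.of i * FreeMonoid.of j * FreeMonoid.of i ∧
      b = FreeMonoid.of j * FreeMonoid.of i * FreeMonoid.of j)

def braidCon (N : ℕ) : Con (FreeMonoid (Fin N)) := conGen (braidRel N)

/-- The positive braid monoid on `N+1` strands `B_{N+1}⁺`,
with generators `σ_1, …, σ_N` indexed by `Fin N`. -/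
abbrev PosBraid (N : ℕ) := (braidCon N).Quotient

/-- The generator `σ_{i+1}` of the positive braid monoid. -/
def sigma {N : ℕ} (i : Fin N) : PosBraid N := (braidCon N).mk' (FreeMonoid.of i)

/-- The flip automorphism `Φ_{N+1} : σ_i ↦ σ_{N+1-i}`. -/
def flipH (N : ℕ) : PosBraid N →* PosBraid N :=
  Con.lift _ ((braidCon N).mk'.comp (FreeMonoid.map Fin.rev)) <| by
    apply Con.conGen_le.mpr
    rintro a b (⟨i, j, hij, rfl, rfl⟩ | ⟨i, j, hij, rfl, rfl⟩) <;>
      simp only [Con.ker_rel, MonoidHom.comp_apply, map_mul, FreeMonoid.map_of] <;>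
      refine (Con.eq _).mpr (ConGen.Rel.of _ _ ?_)
    · exact Or.inl ⟨Fin.rev i, Fin.rev j, by
        simp only [Fin.val_rev]; omega, rfl, rfl⟩
    · exact Or.inr ⟨Fin.rev i, Fin.rev j, by
        simp only [Fin.val_rev]; omega, rfl, rfl⟩

/-- The inclusion `B_{N+1}⁺ → B_{N+2}⁺`. -/
def incl (N : ℕ) : PosBraid N →* PosBraid (N + 1) :=
  Con.lift _ ((braidCon (N + 1)).mk'.comp (FreeMonoid.map Fin.castSucc)) <| by
    apply Con.conGen_le.mpr
    rintro a b (⟨i, j, hij, rfl, rfl⟩ | ⟨i, j, hij, rfl, rfl⟩) <;>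
      simp only [Con.ker_rel, MonoidHom.comp_apply, map_mul, FreeMonoid.map_of] <;>
      refine (Con.eq _).mpr (ConGen.Rel.of _ _ ?_)
    · exact Or.inl ⟨i.castSucc, j.castSucc, by simpa using hij, rfl, rfl⟩
    · exact Or.inr ⟨i.castSucc, j.castSucc, by simpa using hij, rfl, rfl⟩

/-- Product `f^{p-1}(x_p) ⋯ f(x_2) · x_1` of the list `[x_p, …, x_1]`,
where each entry is twisted by an iterate of `f`. -/
def prodFlip {M : Type*} [Monoid M] (f : M → M) : List M → M
  | [] => 1
  | a :: t => f^[t.length] a * prodFlip f t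

/-- `l = [x_p, …, x_1]` (a list of elements of `B_{k+1}⁺`) is the `(k+2)`-splitting of
`x ∈ B_{k+2}⁺` : `x = Φ^{p-1}(x_p) ⋯ Φ(x_2)·x_1`, the leading entry is non-trivial, and
for every `r ≥ 2` the only generator `σ_i` right-dividing `Φ^{p-r}(x_p) ⋯ Φ(x_{r+1})·x_r`
is `σ_1`. -/
def IsSplit {k : ℕ} (x : PosBraid (k + 1)) (l : List (PosBraid k)) : Prop :=
  x = prodFlip (⇑(flipH (k + 1))) (l.map (incl k)) ∧
  l.head? ≠ some 1 ∧
  ∀ j, 1 ≤ j → j < l.length →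
    (∃ z, prodFlip (⇑(flipH (k + 1))) ((l.take j).map (incl k)) =
        z * sigma (⟨0, Nat.succ_pos k⟩ : Fin (k + 1))) ∧
    ∀ i : Fin (k + 1),
      (∃ z, prodFlip (⇑(flipH (k + 1))) ((l.take j).map (incl k)) = z * sigma i) →
      i = (⟨0, Nat.succ_pos k⟩ : Fin (k + 1))

/-- `σ_{i+1}` as an element of `B_{N+1}⁺`, extended by `1` for out-of-range indices. -/
def sigmaP (N : ℕ) (i : ℕ) : PosBraid N := if h : i < N then sigma ⟨i, h⟩ else 1

/-- `δ_{N+1} = σ_N σ_{N-1} ⋯ σ_1` in `B_{N+1}⁺`. -/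
def deltaFull (N : ℕ) : PosBraid N := ((List.ofFn (sigma (N := N))).reverse).prod

/-- `Δ_m` (the Garside element of `B_m⁺`), viewed inside `B_{N+1}⁺`,
via `Δ_1 = 1` and `Δ_{m+1} = σ_1 ⋯ σ_m · Δ_m`. -/
def DeltaP (N : ℕ) : ℕ → PosBraid N
  | 0 => 1
  | m + 1 => ((List.range m).map (sigmaP N)).prod * DeltaP N m

/-- `\widehatΔ_{N+1,d} = Φ^d(δ_{N+1}) ⋯ Φ²(δ_{N+1}) · Φ(δ_{N+1})` (`d` factors). -/
def hatDelta (N : ℕ) (d : ℕ) : PosBraid N :=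
  ((List.range d).map (fun j => (⇑(flipH N))^[d - j] (deltaFull N))).prod

/-- ShortLex extension of a relation: compare lists first by length,
then lexicographically (from the left). -/
def SL {α : Type*} (r : α → α → Prop) (s t : List α) : Prop :=
  s.length < t.length ∨ (s.length = t.length ∧ List.Lex r s t)

/-- The ordering `<⁺` of `B_{k+1}⁺`, defined recursively: on `B_2⁺` it is the comparison
of exponents of `σ_1`; on `B_{k+2}⁺` it is the ShortLex comparison of `(k+2)`-splittings,
entries being compared by `<⁺` on `B_{k+1}⁺`. -/
def ordP : (k : ℕ) → PosBraid k → PosBraid k → Prop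
  | 0 => fun _ _ => False
  | 1 => fun x y => ∃ p q : ℕ, x = sigma (0 : Fin 1) ^ p ∧ y = sigma (0 : Fin 1) ^ q ∧ p < q
  | (k + 2) => fun x y => ∃ lx ly : List (PosBraid (k + 1)),
      IsSplit x lx ∧ IsSplit y ly ∧ SL (ordP (k + 1)) lx ly

namespace BraidAux

open FreeMonoid Relation

variable {N : ℕ}

abbrev FM (N : ℕ) := FreeMonoid (Fin N)

/-- shorthand for the quotient map -/
def q (N : ℕ) : FM N →* PosBraid N := (braidCon N).mk'

lemma q_of (i : Fin N) : q N (of i) = sigma i := rfl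

/-- one-step rewriting -/
def Step (N : ℕ) (x y : FM N) : Prop :=
  ∃ u v a b, braidRel N a b ∧ x = u * a * v ∧ y = u * b * v

lemma braidRel_symm {a b : FM N} (h : braidRel N a b) : braidRel N b a := by
  rcases h with ⟨i, j, hij, rfl, rfl⟩ | ⟨i, j, hij, rfl, rfl⟩
  · exact Or.inl ⟨j, i, hij.symm, rfl, rfl⟩
  · exact Or.inr ⟨j, i, hij.symm, rfl, rfl⟩

lemma Step.symm {x y : FM N} (h : Step N x y) : Step N y x := by
  obtain ⟨u, v, a, b, hr, h1, h2⟩ := h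
  exact ⟨u, v, b, a, braidRel_symm hr, h2, h1⟩

lemma braidRel_length {a b : FM N} (h : braidRel N a b) :
    a.toList.length = b.toList.length := by
  rcases h with ⟨i, j, _, rfl, rfl⟩ | ⟨i, j, _, rfl, rfl⟩ <;> rfl

lemma Step.length {x y : FM N} (h : Step N x y) : x.toList.length = y.toList.length := by
  obtain ⟨u, v, a, b, hr, rfl, rfl⟩ := h
  simp [toList_mul, braidRel_length hr]

lemma Step.braidCon {x y : FM N} (h : Step N x y) : braidCon N x y := by
  obtain ⟨u, v, a, b, hr, rfl, rfl⟩ := h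
  exact (_root_.braidCon N).mul ((_root_.braidCon N).mul ((_root_.braidCon N).refl u)
    (ConGen.Rel.of _ _ hr)) ((_root_.braidCon N).refl v)

lemma Step.mul_left {x y : FM N} (z : FM N) (h : Step N x y) :
    Step N (z * x) (z * y) := by
  obtain ⟨u, v, a, b, hr, rfl, rfl⟩ := h
  exact ⟨z * u, v, a, b, hr, by simp [mul_assoc], by simp [mul_assoc]⟩

lemma Step.mul_right {x y : FM N} (z : FM N) (h : Step N x y) :
    Step N (x * z) (y * z) := by
  obtain ⟨u, v, a, b, hr, rfl, rfl⟩ := h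
  exact ⟨u, v * z, a, b, hr, by simp [mul_assoc], by simp [mul_assoc]⟩

/-- the RTG closure of `Step` is a congruence -/
def stepCon (N : ℕ) : Con (FM N) where
  r x y := ReflTransGen (Step N) x y
  iseqv := by
    refine ⟨fun _ => ReflTransGen.refl, ?_, fun h1 h2 => h1.trans h2⟩
    · intro x y h
      induction h with
      | refl => exact ReflTransGen.refl
      | tail _ h2 ih => exact ReflTransGen.head h2.symm ih
  mul' := by
    intro w x y z h1 h2
    have s1 : ReflTransGen (Step N) (w * y) (x * y) := by
      clear h2
      induction h1 with
      | refl => exact ReflTransGen.refl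
      | tail _ h ih => exact ih.tail (h.mul_right y)
    have s2 : ReflTransGen (Step N) (x * y) (x * z) := by
      clear h1
      induction h2 with
      | refl => exact ReflTransGen.refl
      | tail _ h ih => exact ih.tail (h.mul_left x)
    exact s1.trans s2

lemma braidCon_iff_rtg {x y : FM N} :
    braidCon N x y ↔ ReflTransGen (Step N) x y := by
  constructor
  · intro h
    have : braidCon N ≤ stepCon N := by
      apply Con.conGen_le.mpr
      intro a b hab
      exact ReflTransGen.single ⟨1, 1, a, b, hab, by simp, by simp⟩
    exact this h
  · intro h
    induction h with
    | refl => exact (braidCon N).refl x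
    | tail _ h2 ih => exact (braidCon N).trans ih h2.braidCon

lemma q_eq_iff {x y : FM N} : q N x = q N y ↔ ReflTransGen (Step N) x y := by
  rw [show (q N x = q N y) ↔ braidCon N x y from Con.eq _, braidCon_iff_rtg]

lemma braidCon_length {x y : FM N} (h : braidCon N x y) :
    x.toList.length = y.toList.length := by
  rw [braidCon_iff_rtg] at h
  induction h with
  | refl => rfl
  | tail _ h2 ih => exact ih.trans h2.length

/-- length of a positive braid -/
def elen (x : PosBraid N) : ℕ :=
  Con.liftOn x (fun w => w.toList.length) fun _ _ h => braidCon_length h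

lemma elen_q (w : FM N) : elen (q N w) = w.toList.length := rfl

lemma elen_mul (x y : PosBraid N) : elen (x * y) = elen x + elen y := by
  induction x using Con.induction_on with | H a =>
  induction y using Con.induction_on with | H b =>
  show elen (q N a * q N b) = elen (q N a) + elen (q N b)
  rw [← map_mul (q N) a b]
  simp only [elen_q, toList_mul, List.length_append]

lemma elen_sigma (i : Fin N) : elen (sigma i) = 1 := rfl

lemma elen_one : elen (1 : PosBraid N) = 0 := rfl

lemma eq_one_of_elen_zero {x : PosBraid N} (h : elen x = 0) : x = 1 := by
  induction x using Con.induction_on with | H a =>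
  have : a.toList = [] := List.length_eq_zero_iff.mp h
  have : a = 1 := by
    apply toList.injective
    simpa using this
  rw [this]; rfl

lemma exists_rep (x : PosBraid N) : ∃ w : FM N, q N w = x :=
  Con.mk'_surjective x

/-- support of a positive braid -/
lemma braidRel_supp {a b : FM N} (h : braidRel N a b) :
    a.toList.toFinset = b.toList.toFinset := by
  rcases h with ⟨i, j, _, rfl, rfl⟩ | ⟨i, j, _, rfl, rfl⟩ <;>
    · ext x
      simp only [List.mem_toFinset]
      show x ∈ toList _ ↔ x ∈ toList _
      simp only [toList_mul, toList_of, List.mem_append, List.mem_singleton]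
      tauto

lemma braidCon_supp {x y : FM N} (h : braidCon N x y) :
    x.toList.toFinset = y.toList.toFinset := by
  rw [braidCon_iff_rtg] at h
  induction h with
  | refl => rfl
  | tail _ h2 ih =>
    obtain ⟨u, v, a, b, hr, rfl, rfl⟩ := h2
    rw [ih]
    simp only [toList_mul, List.toFinset_append, braidRel_supp hr]

def suppE (x : PosBraid N) : Finset (Fin N) :=
  Con.liftOn x (fun w => w.toList.toFinset) fun _ _ h => braidCon_supp h

lemma suppE_q (w : FM N) : suppE (q N w) = w.toList.toFinset := rfl

lemma suppE_mul (x y : PosBraid N) : suppE (x * y) = suppE x ∪ suppE y := by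
  induction x using Con.induction_on with | H a =>
  induction y using Con.induction_on with | H b =>
  show suppE (q N a * q N b) = suppE (q N a) ∪ suppE (q N b)
  rw [← map_mul (q N) a b]
  simp only [suppE_q, toList_mul, List.toFinset_append]

lemma suppE_sigma (i : Fin N) : suppE (sigma i) = {i} := rfl

end BraidAux
namespace BraidAux

open FreeMonoid Relation

variable {N : ℕ}

def Far (i j : Fin N) : Prop := (i : ℕ) + 2 ≤ (j : ℕ) ∨ (j : ℕ) + 2 ≤ (i : ℕ)

def Adj (i j : Fin N) : Prop := (i : ℕ) + 1 = (j : ℕ) ∨ (j : ℕ) + 1 = (i : ℕ)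

lemma Far.symm {i j : Fin N} (h : Far i j) : Far j i := Or.symm h

lemma Adj.symm {i j : Fin N} (h : Adj i j) : Adj j i := Or.symm h

lemma trichotomy (i j : Fin N) : i = j ∨ Far i j ∨ Adj i j := by
  rcases Nat.lt_trichotomy (i : ℕ) (j : ℕ) with h | h | h
  · rcases Nat.lt_or_ge ((i : ℕ) + 1) (j : ℕ) with h2 | h2
    · exact Or.inr (Or.inl (Or.inl (by omega)))
    · exact Or.inr (Or.inr (Or.inl (by omega)))
  · exact Or.inl (Fin.ext h)
  · rcases Nat.lt_or_ge ((j : ℕ) + 1) (i : ℕ) with h2 | h2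
    · exact Or.inr (Or.inl (Or.inr (by omega)))
    · exact Or.inr (Or.inr (Or.inr (by omega)))

lemma sigma_mul_comm {i j : Fin N} (h : Far i j) :
    sigma i * sigma j = sigma j * sigma i := by
  have := (Con.eq (braidCon N)).mpr
    (ConGen.Rel.of _ _ (Or.inl ⟨i, j, h, rfl, rfl⟩) :
      braidCon N (of i * of j) (of j * of i))
  exact this

lemma sigma_mul_braid {i j : Fin N} (h : Adj i j) :
    sigma i * sigma j * sigma i = sigma j * sigma i * sigma j := by
  have := (Con.eq (braidCon N)).mpr
    (ConGen.Rel.of _ _ (Or.inr ⟨i, j, h, rfl, rfl⟩) :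
      braidCon N (of i * of j * of i) (of j * of i * of j))
  exact this

lemma swapC {i j : Fin N} (h : Far i j) (X : PosBraid N) :
    sigma i * (sigma j * X) = sigma j * (sigma i * X) := by
  rw [← mul_assoc, sigma_mul_comm h, mul_assoc]

lemma braidC {i j : Fin N} (h : Adj i j) (X : PosBraid N) :
    sigma i * (sigma j * (sigma i * X)) = sigma j * (sigma i * (sigma j * X)) := by
  simp only [← mul_assoc]
  rw [sigma_mul_braid h]

lemma q_cons (i : Fin N) (w : FM N) : q N (of i * w) = sigma i * q N w := by
  rw [map_mul, q_of]

lemma eq_of_toList_cons {u : FM N} {y : Fin N} {S : List (Fin N)}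
    (h : toList u = y :: S) : u = of y * ofList S := by
  apply toList.injective
  simp [toList_of_mul, h]

/-- the conclusion of the key lemma -/
def KeyConcl (i j : Fin N) (X Y : PosBraid N) : Prop :=
  (i = j → X = Y) ∧
  (Far i j → ∃ W, X = sigma j * W ∧ Y = sigma i * W) ∧
  (Adj i j → ∃ W, X = sigma j * (sigma i * W) ∧ Y = sigma i * (sigma j * W))

theorem keyL (L : ℕ) : ∀ (u v : FM N) (i j : Fin N),
    u.toList.length < L → q N (of i * u) = q N (of j * v) →
    KeyConcl i j (q N u) (q N v) := by
  induction L using Nat.strong_induction_on with | _ L SIH =>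
  -- element-level form of the outer induction hypothesis
  have OIHe : ∀ (X Y : PosBraid N) (i j : Fin N), elen X + 1 < L →
      sigma i * X = sigma j * Y → KeyConcl i j X Y := by
    intro X Y i j hlen heq
    obtain ⟨a, ha⟩ := exists_rep X
    obtain ⟨b, hb⟩ := exists_rep Y
    have elenX : elen X = a.toList.length := by rw [← ha]; rfl
    have h' : q N (of i * a) = q N (of j * b) := by
      rw [q_cons, q_cons, ha, hb]; exact heq
    obtain ⟨Ca, Cb, Cc⟩ := SIH (a.toList.length + 1) (by omega) a b i j (by omega) h'
    rw [ha, hb] at Ca Cb Cc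
    exact ⟨Ca, Cb, Cc⟩
  intro u v i j hL h
  rw [show (q N (of i * u) = q N (of j * v)) ↔ _ from q_eq_iff] at h
  have MAIN : ∀ (a : FM N), ReflTransGen (Step N) a (of j * v) →
      ∀ (i : Fin N) (u : FM N), a = of i * u → u.toList.length < L →
      KeyConcl i j (q N u) (q N v) := by
    intro a hch
    induction hch using Relation.ReflTransGen.head_induction_on with
    | refl =>
      intro i u hau _
      have hc : j :: toList v = i :: toList u := by
        have := congrArg toList hau
        simpa [toList_of_mul] using this
      injection hc with h1 h2
      subst h1
      have huv : v = u := toList.injective h2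
      subst huv
      refine ⟨fun _ => rfl, fun F => absurd F ?_, fun A => absurd A ?_⟩
      · intro F; rcases F with F | F <;> omega
      · intro A; rcases A with A | A <;> omega
    | head h' hch IH =>
      intro i u hau hLu
      obtain ⟨p, sfx, r1, r2, hr, hac, hcc⟩ := h'
      rw [hau] at hac
      have hl : i :: toList u = toList p ++ toList r1 ++ toList sfx := by
        have := congrArg toList hac
        simpa [toList_mul, toList_of_mul] using this
      rcases hp : toList p with _ | ⟨x, P'⟩
      · -- the rewrite happens at the very front
        rw [hp] at hl
        simp only [List.nil_append] at hl
        have hp1 : p = 1 := toList.injective (by simpa using hp)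
        rcases hr with ⟨x, y, hxy, rfl, rfl⟩ | ⟨x, y, hxy, rfl, rfl⟩
        · -- commutation rule at the front
          simp only [toList_mul, toList_of, List.cons_append, List.nil_append,
            List.singleton_append] at hl
          injection hl with hxi hTu
          subst hxi
          have Fiy : Far i y := hxy
          have hu : u = of y * ofList (toList sfx) := eq_of_toList_cons hTu
          have hqu : q N u = sigma y * q N sfx := by
            rw [hu, q_cons]
            congr 1
          rw [hp1, one_mul, mul_assoc] at hcc
          have hc2 := hcc
          have hlen2 : (of i * sfx).toList.length < L := by
            have h1 := congrArg List.length hTu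
            simp only [List.length_cons] at h1
            simp only [toList_of_mul, List.length_cons]
            omega
          obtain ⟨Ka, Kb, Kc⟩ := IH y (of i * sfx) hc2 (by
            simpa [toList_of_mul, List.length_cons] using hlen2)
          rw [q_cons] at Ka Kb Kc
          have hlS : (toList sfx).length + 2 = (toList u).length + 1 := by
            rw [hTu]; simp
          rcases trichotomy y j with hyj | Fyj | Ayj
          · -- y = j
            subst hyj
            have hv : q N v = sigma i * q N sfx := (Ka rfl).symm
            refine ⟨fun hij => ?_, fun Fij => ?_, fun Aij => ?_⟩
            · exfalso; subst hij; rcases Fiy with F | F <;> omega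
            · exact ⟨q N sfx, by rw [hqu], by rw [hv]⟩
            · exfalso; rcases Fiy with F | F <;> rcases Aij with A | A <;> omega
          · -- Far y j
            obtain ⟨W, h1, h2⟩ := Kb Fyj
            have eW : elen W = (toList sfx).length := by
              have := congrArg elen h1
              simp only [elen_mul, elen_sigma, elen_q] at this
              omega
            obtain ⟨Ca, Cb, Cc⟩ := OIHe (q N sfx) W i j (by simp only [elen_q]; omega) h1
            refine ⟨fun hij => ?_, fun Fij => ?_, fun Aij => ?_⟩
            · rw [hqu, Ca hij, h2]
            · obtain ⟨T, hT1, hT2⟩ := Cb Fij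
              refine ⟨sigma y * T, ?_, ?_⟩
              · rw [hqu, hT1, swapC Fyj]
              · rw [h2, hT2, swapC Fiy]
            · obtain ⟨T, hT1, hT2⟩ := Cc Aij
              refine ⟨sigma y * T, ?_, ?_⟩
              · rw [hqu, hT1, swapC Fyj, swapC Fiy.symm]
              · rw [h2, hT2, swapC Fiy.symm, swapC Fyj]
          · -- Adj y j
            obtain ⟨W, h1, h2⟩ := Kc Ayj
            have eW : elen W + 1 = (toList sfx).length := by
              have := congrArg elen h1
              simp only [elen_mul, elen_sigma, elen_q] at this
              omega
            obtain ⟨Ca, Cb, Cc⟩ := OIHe (q N sfx) (sigma y * W) i j (by simp only [elen_q]; omega) h1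
            refine ⟨fun hij => ?_, fun Fij => ?_, fun Aij => ?_⟩
            · exfalso; subst hij; rcases Fiy with F | F <;> rcases Ayj with A | A <;> omega
            · obtain ⟨T, hT1, hT2⟩ := Cb Fij
              -- hT2 : sigma y * W = sigma i * T
              have eT : elen W = elen T := by
                have := congrArg elen hT2
                simp only [elen_mul, elen_sigma] at this
                omega
              obtain ⟨Da, Db, Dc⟩ := OIHe W T y i (by omega) hT2
              obtain ⟨S, hS1, hS2⟩ := Db Fiy.symm
              refine ⟨sigma y * (sigma j * S), ?_, ?_⟩
              · rw [hqu, hT1, hS2, braidC Ayj]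
              · rw [h2, hS1, swapC Fij.symm, swapC Fiy]
            · obtain ⟨T, hT1, hT2⟩ := Cc Aij
              -- hT2 : sigma y * W = sigma i * (sigma j * T)
              have eT : elen W = elen T + 1 := by
                have := congrArg elen hT2
                simp only [elen_mul, elen_sigma] at this
                omega
              obtain ⟨Da, Db, Dc⟩ := OIHe W (sigma j * T) y i (by omega) hT2
              obtain ⟨S, hS1, hS2⟩ := Db Fiy.symm
              -- hS1 : W = sigma i * S, hS2 : sigma j * T = sigma y * S
              have eS : elen T = elen S := by
                have := congrArg elen hS2
                simp only [elen_mul, elen_sigma] at this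
                omega
              obtain ⟨Ea, Eb, Ec⟩ := OIHe T S j y (by omega) hS2
              obtain ⟨R, hR1, hR2⟩ := Ec Ayj.symm
              -- hR1 : T = sigma y * (sigma j * R), hR2 : S = sigma j * (sigma y * R)
              refine ⟨sigma y * (sigma j * (sigma i * R)), ?_, ?_⟩
              · rw [hqu, hT1, hR1, swapC Fiy, braidC Ayj, braidC Aij.symm, swapC Fiy.symm]
              · rw [h2, hS1, hR2, braidC Aij.symm, swapC Fiy, swapC Fiy.symm, braidC Ayj]
        · -- braid rule at the front
          simp only [toList_mul, toList_of, List.cons_append, List.nil_append,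
            List.singleton_append] at hl
          injection hl with hxi hTu
          subst hxi
          have Aiy : Adj i y := hxy
          have hu : u = of y * ofList (i :: toList sfx) := eq_of_toList_cons hTu
          have hqu : q N u = sigma y * (sigma i * q N sfx) := by
            rw [hu, show ofList (i :: toList sfx) = of i * sfx from rfl, q_cons, q_cons]
          rw [hp1, one_mul, mul_assoc, mul_assoc] at hcc
          have hc2 := hcc
          have hlS : (toList sfx).length + 2 = (toList u).length := by
            rw [hTu]; simp
          obtain ⟨Ka, Kb, Kc⟩ := IH y (of i * (of y * sfx)) hc2 (by
            simp only [toList_of_mul, List.length_cons]; omega)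
          rw [q_cons, q_cons] at Ka Kb Kc
          rcases trichotomy y j with hyj | Fyj | Ayj
          · -- y = j
            subst hyj
            have hv : q N v = sigma i * (sigma y * q N sfx) := (Ka rfl).symm
            refine ⟨fun hij => ?_, fun Fij => ?_, fun Aij => ?_⟩
            · exfalso; subst hij; rcases Aiy with A | A <;> omega
            · exfalso; rcases Aiy with A | A <;> rcases Fij with F | F <;> omega
            · exact ⟨q N sfx, by rw [hqu], by rw [hv]⟩
          · -- Far y j
            obtain ⟨W, h1, h2⟩ := Kb Fyj
            -- h1 : sigma i * (sigma y * q sfx) = sigma j * W, h2 : q v = sigma y * W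
            have eW : elen W = (toList sfx).length + 1 := by
              have := congrArg elen h1
              simp only [elen_mul, elen_sigma, elen_q] at this
              omega
            obtain ⟨Ca, Cb, Cc⟩ := OIHe (sigma y * q N sfx) W i j (by
              simp only [elen_mul, elen_sigma, elen_q]; omega) h1
            refine ⟨fun hij => ?_, fun Fij => ?_, fun Aij => ?_⟩
            · exfalso; subst hij; rcases Aiy with A | A <;> rcases Fyj with F | F <;> omega
            · obtain ⟨T, hT1, hT2⟩ := Cb Fij
              -- hT1 : sigma y * q sfx = sigma j * T, hT2 : W = sigma i * T
              have eT : elen T = (toList sfx).length := by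
                have := congrArg elen hT1
                simp only [elen_mul, elen_sigma, elen_q] at this
                omega
              obtain ⟨Da, Db, Dc⟩ := OIHe (q N sfx) T y j (by
                simp only [elen_q]; omega) hT1
              obtain ⟨S, hS1, hS2⟩ := Db Fyj
              -- hS1 : q sfx = sigma j * S, hS2 : T = sigma y * S
              refine ⟨sigma y * (sigma i * S), ?_, ?_⟩
              · rw [hqu, hS1, swapC Fij, swapC Fyj]
              · rw [h2, hT2, hS2, braidC Aiy]
            · obtain ⟨T, hT1, hT2⟩ := Cc Aij
              -- hT1 : sigma y * q sfx = sigma j * (sigma i * T), hT2 : W = sigma i * (sigma j * T)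
              have eT : elen T + 1 = (toList sfx).length := by
                have := congrArg elen hT1
                simp only [elen_mul, elen_sigma, elen_q] at this
                omega
              obtain ⟨Da, Db, Dc⟩ := OIHe (q N sfx) (sigma i * T) y j (by
                simp only [elen_q]; omega) hT1
              obtain ⟨S, hS1, hS2⟩ := Db Fyj
              -- hS1 : q sfx = sigma j * S, hS2 : sigma i * T = sigma y * S
              have eS : elen S = elen T := by
                have := congrArg elen hS2
                simp only [elen_mul, elen_sigma] at this
                omega
              obtain ⟨Ea, Eb, Ec⟩ := OIHe T S i y (by omega) hS2
              obtain ⟨R, hR1, hR2⟩ := Ec Aiy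
              -- hR1 : T = sigma y * (sigma i * R), hR2 : S = sigma i * (sigma y * R)
              refine ⟨sigma y * (sigma i * (sigma j * R)), ?_, ?_⟩
              · rw [hqu, hS1, hR2, braidC Aij, swapC Fyj.symm, swapC Fyj, braidC Aiy.symm]
              · rw [h2, hT2, hR1, swapC Fyj.symm, braidC Aiy.symm, braidC Aij, swapC Fyj]
          · -- Adj y j
            obtain ⟨W, h1, h2⟩ := Kc Ayj
            -- h1 : sigma i * (sigma y * q sfx) = sigma j * (sigma y * W), h2 : q v = sigma y * (sigma j * W)
            have eW : elen W = (toList sfx).length := by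
              have := congrArg elen h1
              simp only [elen_mul, elen_sigma, elen_q] at this
              omega
            obtain ⟨Ca, Cb, Cc⟩ := OIHe (sigma y * q N sfx) (sigma y * W) i j (by
              simp only [elen_mul, elen_sigma, elen_q]; omega) h1
            rcases trichotomy i j with rfl | Fij | Aij
            · -- i = j
              have h3 : sigma y * q N sfx = sigma y * W := Ca rfl
              obtain ⟨Da, Db, Dc⟩ := OIHe (q N sfx) W y y (by
                simp only [elen_q]; omega) h3
              have h4 : q N sfx = W := Da rfl
              refine ⟨fun _ => ?_, fun Fij => ?_, fun Aij => ?_⟩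
              · rw [hqu, h2, h4]
              · exfalso; rcases Fij with F | F <;> omega
              · exfalso; rcases Aij with A | A <;> omega
            · refine ⟨fun hij => by exact absurd (hij ▸ Fij) (by rintro (F | F) <;> omega),
                fun _ => ?_, fun Aij => by
                  exact absurd Aij (by rintro (A | A) <;> rcases Fij with F | F <;> omega)⟩
              obtain ⟨T, hT1, hT2⟩ := Cb Fij
              -- hT1 : sigma y * q sfx = sigma j * T, hT2 : sigma y * W = sigma i * T
              have eT : elen T = (toList sfx).length := by
                have := congrArg elen hT1
                simp only [elen_mul, elen_sigma, elen_q] at this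
                omega
              obtain ⟨Da, Db, Dc⟩ := OIHe (q N sfx) T y j (by
                simp only [elen_q]; omega) hT1
              obtain ⟨S, hS1, hS2⟩ := Dc Ayj
              -- hS1 : q sfx = sigma j * (sigma y * S), hS2 : T = sigma y * (sigma j * S)
              obtain ⟨Ea, Eb, Ec⟩ := OIHe W T y i (by
                have := congrArg elen hT2
                simp only [elen_mul, elen_sigma] at this
                omega) hT2
              obtain ⟨S', hS'1, hS'2⟩ := Ec Aiy.symm
              -- hS'1 : W = sigma i * (sigma y * S'), hS'2 : T = sigma y * (sigma i * S')
              -- two expressions for T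
              have hTT : sigma y * (sigma j * S) = sigma y * (sigma i * S') := by
                rw [← hS2, ← hS'2]
              obtain ⟨Fa, Fb, Fc⟩ := OIHe (sigma j * S) (sigma i * S') y y (by
                have e1 := congrArg elen hS2
                simp only [elen_mul, elen_sigma] at e1
                simp only [elen_mul, elen_sigma]; omega) hTT
              have hJS : sigma j * S = sigma i * S' := Fa rfl
              obtain ⟨Ga, Gb, Gc⟩ := OIHe S S' j i (by
                have e1 := congrArg elen hS2
                simp only [elen_mul, elen_sigma] at e1
                omega) hJS
              obtain ⟨R, hR1, hR2⟩ := Gb Fij.symm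
              -- hR1 : S = sigma i * R, hR2 : S' = sigma j * R
              refine ⟨sigma y * (sigma j * (sigma i * (sigma y * R))), ?_, ?_⟩
              · rw [hqu, hS1, hR1, swapC Fij, braidC Aiy, braidC Ayj]
              · rw [h2, hS'1, hR2, swapC Fij.symm, braidC Ayj.symm, braidC Aiy.symm, swapC Fij]
            · exfalso
              rcases Aiy with A | A <;> rcases Ayj with B | B <;> rcases Aij with C | C <;> omega
      · -- the rewrite happens inside u
        rw [hp] at hl
        simp only [List.cons_append] at hl
        injection hl with hxi hTu
        subst hxi
        have hpv : p = of i * ofList P' := toList.injective (by simp [toList_of_mul, hp])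
        have hueq : u = ofList P' * r1 * sfx := by
          apply toList.injective
          rw [hTu]
          simp [toList_mul, List.append_assoc]
        have hstep : Step N u (ofList P' * r2 * sfx) :=
          ⟨ofList P', sfx, r1, r2, hr, hueq, rfl⟩
        have hq : q N u = q N (ofList P' * r2 * sfx) := q_eq_iff.mpr (ReflTransGen.single hstep)
        have hlen' : (toList (ofList P' * r2 * sfx)).length < L := by
          have := hstep.length
          omega
        obtain ⟨Ka, Kb, Kc⟩ := IH i (ofList P' * r2 * sfx)
          (by rw [hcc, hpv]; simp only [mul_assoc]) hlen'
        rw [← hq] at Ka Kb Kc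
        exact ⟨Ka, Kb, Kc⟩
  exact MAIN _ h i u rfl hL

end BraidAux
namespace BraidAux

open FreeMonoid Relation

variable {N : ℕ}

theorem keyE {X Y : PosBraid N} {i j : Fin N} (h : sigma i * X = sigma j * Y) :
    KeyConcl i j X Y := by
  obtain ⟨a, ha⟩ := exists_rep X
  obtain ⟨b, hb⟩ := exists_rep Y
  have h' : q N (of i * a) = q N (of j * b) := by rw [q_cons, q_cons, ha, hb]; exact h
  have := keyL (a.toList.length + 1) a b i j (by omega) h'
  rwa [ha, hb] at this

lemma sigma_cancel {i : Fin N} {X Y : PosBraid N} (h : sigma i * X = sigma i * Y) : X = Y :=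
  (keyE h).1 rfl

lemma mul_left_cancel'' (Z X Y : PosBraid N) (h : Z * X = Z * Y) : X = Y := by
  obtain ⟨w, hw⟩ := exists_rep Z
  subst hw
  induction w using FreeMonoid.recOn with
  | one => simpa using h
  | of_mul a t ih =>
    apply ih
    apply sigma_cancel (i := a)
    rw [q_cons, mul_assoc, mul_assoc] at h
    exact h

/-- word reversal -/
def wrev (w : FM N) : FM N := ofList (toList w).reverse

lemma wrev_mul (x y : FM N) : wrev (x * y) = wrev y * wrev x := by
  apply toList.injective
  simp [wrev, toList_mul]

lemma wrev_of (i : Fin N) : wrev (of i) = of i := rfl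

lemma braidRel_rev {a b : FM N} (h : braidRel N a b) : braidRel N (wrev a) (wrev b) := by
  rcases h with ⟨i, j, hij, rfl, rfl⟩ | ⟨i, j, hij, rfl, rfl⟩
  · exact Or.inl ⟨j, i, hij.symm, by simp [wrev_mul, wrev_of], by simp [wrev_mul, wrev_of]⟩
  · exact Or.inr ⟨i, j, hij, by simp [wrev_mul, wrev_of, mul_assoc],
      by simp [wrev_mul, wrev_of, mul_assoc]⟩

lemma Step.rev {x y : FM N} (h : Step N x y) : Step N (wrev x) (wrev y) := by
  obtain ⟨u, v, a, b, hr, rfl, rfl⟩ := h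
  exact ⟨wrev v, wrev u, wrev a, wrev b, braidRel_rev hr,
    by simp [wrev_mul, mul_assoc], by simp [wrev_mul, mul_assoc]⟩

lemma braidCon_rev {x y : FM N} (h : braidCon N x y) : braidCon N (wrev x) (wrev y) := by
  rw [braidCon_iff_rtg] at h ⊢
  induction h with
  | refl => exact ReflTransGen.refl
  | tail _ h2 ih => exact ih.tail h2.rev

def revE (x : PosBraid N) : PosBraid N :=
  Con.liftOn x (fun w => q N (wrev w)) fun _ _ h => (Con.eq _).mpr (braidCon_rev h)

lemma revE_q (w : FM N) : revE (q N w) = q N (wrev w) := rfl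

lemma revE_mul (x y : PosBraid N) : revE (x * y) = revE y * revE x := by
  induction x using Con.induction_on with | H a =>
  induction y using Con.induction_on with | H b =>
  show revE (q N a * q N b) = revE (q N b) * revE (q N a)
  rw [← map_mul, revE_q, revE_q, revE_q, wrev_mul, map_mul]

lemma revE_sigma (i : Fin N) : revE (sigma i) = sigma i := rfl

lemma revE_revE (x : PosBraid N) : revE (revE x) = x := by
  induction x using Con.induction_on with | H a =>
  show revE (revE (q N a)) = q N a
  rw [revE_q, revE_q]
  congr 1
  apply toList.injective
  simp [wrev]

lemma revE_inj {x y : PosBraid N} (h : revE x = revE y) : x = y := by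
  rw [← revE_revE x, ← revE_revE y, h]

lemma elen_revE (x : PosBraid N) : elen (revE x) = elen x := by
  induction x using Con.induction_on with | H a =>
  show elen (revE (q N a)) = elen (q N a)
  rw [revE_q]
  simp [elen_q, wrev]

lemma suppE_revE (x : PosBraid N) : suppE (revE x) = suppE x := by
  induction x using Con.induction_on with | H a =>
  show suppE (revE (q N a)) = suppE (q N a)
  rw [revE_q]
  simp [suppE_q, wrev]

lemma revE_one : revE (1 : PosBraid N) = 1 := rfl

theorem keyR {X Y : PosBraid N} {i j : Fin N} (h : X * sigma i = Y * sigma j) :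
    (i = j → X = Y) ∧
    (Far i j → ∃ W, X = W * sigma j ∧ Y = W * sigma i) ∧
    (Adj i j → ∃ W, X = W * sigma i * sigma j ∧ Y = W * sigma j * sigma i) := by
  have h' : sigma i * revE X = sigma j * revE Y := by
    rw [← revE_sigma i, ← revE_sigma j, ← revE_mul, ← revE_mul, h]
  obtain ⟨Ca, Cb, Cc⟩ := keyE h'
  refine ⟨fun hij => ?_, fun F => ?_, fun A => ?_⟩
  · exact revE_inj (by rw [← revE_revE (revE X), Ca hij, revE_revE])
  · obtain ⟨W, h1, h2⟩ := Cb F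
    refine ⟨revE W, ?_, ?_⟩
    · apply revE_inj
      rw [revE_mul, revE_revE, revE_sigma, h1]
    · apply revE_inj
      rw [revE_mul, revE_revE, revE_sigma, h2]
  · obtain ⟨W, h1, h2⟩ := Cc A
    refine ⟨revE W, ?_, ?_⟩
    · apply revE_inj
      rw [revE_mul, revE_mul, revE_revE, revE_sigma, revE_sigma, h1]
    · apply revE_inj
      rw [revE_mul, revE_mul, revE_revE, revE_sigma, revE_sigma, h2]

lemma sigma_cancel_right {i : Fin N} {X Y : PosBraid N} (h : X * sigma i = Y * sigma i) :
    X = Y := (keyR h).1 rfl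

lemma mul_right_cancel'' (Z X Y : PosBraid N) (h : X * Z = Y * Z) : X = Y := by
  apply revE_inj
  apply mul_left_cancel'' (revE Z)
  rw [← revE_mul, ← revE_mul, h]

lemma exists_gen_right {x : PosBraid N} (h : x ≠ 1) :
    ∃ (z : PosBraid N) (i : Fin N), x = z * sigma i ∧ i ∈ suppE x := by
  obtain ⟨w, hw⟩ := exists_rep x
  rcases List.eq_nil_or_concat (toList w) with hnil | ⟨t, i, ht⟩
  · exfalso
    apply h
    rw [← hw]
    have : w = 1 := toList.injective (by simpa using hnil)
    rw [this]; rfl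
  · have hw2 : w = ofList t * of i := toList.injective (by simp [toList_mul, ht])
    refine ⟨q N (ofList t), i, ?_, ?_⟩
    · rw [← hw, hw2, map_mul, q_of]
    · rw [← hw, suppE_q, ht]
      simp

lemma eq_one_iff_elen {x : PosBraid N} : x = 1 ↔ elen x = 0 := by
  constructor
  · rintro rfl; rfl
  · exact eq_one_of_elen_zero

end BraidAux
namespace BraidAux

open FreeMonoid Relation

variable {N n : ℕ}

lemma incl_q (w : FM n) : incl n (q n w) = q (n+1) (FreeMonoid.map Fin.castSucc w) := rfl

lemma flip_q (w : FM N) : flipH N (q N w) = q N (FreeMonoid.map Fin.rev w) := rfl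

lemma flip_sigma (i : Fin N) : flipH N (sigma i) = sigma i.rev := rfl

lemma toList_fm_map {α β} (f : α → β) (w : FreeMonoid α) :
    toList (FreeMonoid.map f w) = (toList w).map f := rfl

lemma flip_flip (x : PosBraid N) : flipH N (flipH N x) = x := by
  induction x using Con.induction_on with | H a =>
  show flipH N (flipH N (q N a)) = q N a
  rw [flip_q, flip_q]
  congr 1
  apply toList.injective
  simp [toList_fm_map, List.map_map, Function.comp_def, Fin.rev_rev]

lemma flip_inj {x y : PosBraid N} (h : flipH N x = flipH N y) : x = y := by
  rw [← flip_flip x, ← flip_flip y, h]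

lemma elen_flip (x : PosBraid N) : elen (flipH N x) = elen x := by
  induction x using Con.induction_on with | H a =>
  show elen (flipH N (q N a)) = elen (q N a)
  rw [flip_q]
  simp [elen_q, toList_fm_map]

lemma elen_incl (x : PosBraid n) : elen (incl n x) = elen x := by
  induction x using Con.induction_on with | H a =>
  show elen (incl n (q n a)) = elen (q n a)
  rw [incl_q]
  simp [elen_q, toList_fm_map]

lemma flip_div {x z : PosBraid N} {i : Fin N} (h : x = z * sigma i) :
    flipH N x = flipH N z * sigma i.rev := by
  rw [h, map_mul, flip_sigma]

/-- having support among the first `n` generators -/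
def Sub (x : PosBraid (n+1)) : Prop := ∀ i ∈ suppE x, (i : ℕ) < n

/-- the only generator right-dividing `y` is the top one -/
def OnlyTop (y : PosBraid (n+1)) : Prop :=
  ∀ (i : Fin (n+1)) (z : PosBraid (n+1)), y = z * sigma i → (i : ℕ) = n

def OnlyBot (y : PosBraid (n+1)) : Prop :=
  ∀ (i : Fin (n+1)) (z : PosBraid (n+1)), y = z * sigma i → (i : ℕ) = 0

lemma OnlyBot_flip {y : PosBraid (n+1)} (h : OnlyTop y) : OnlyBot (flipH (n+1) y) := by
  intro i z hz
  have h2 : y = flipH (n+1) z * sigma i.rev := by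
    rw [← flip_flip y, hz, map_mul, flip_sigma]
  have := h i.rev _ h2
  have hv := i.isLt
  simp only [Fin.val_rev] at this
  omega

lemma OnlyTop_flip {y : PosBraid (n+1)} (h : OnlyBot y) : OnlyTop (flipH (n+1) y) := by
  intro i z hz
  have h2 : y = flipH (n+1) z * sigma i.rev := by
    rw [← flip_flip y, hz, map_mul, flip_sigma]
  have := h i.rev _ h2
  have hv := i.isLt
  simp only [Fin.val_rev] at this
  omega

lemma word_lift (w : FM (n+1)) (h : ∀ a ∈ toList w, (a : ℕ) < n) :
    ∃ w' : FM n, FreeMonoid.map Fin.castSucc w' = w := by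
  induction w using FreeMonoid.recOn with
  | one => exact ⟨1, rfl⟩
  | of_mul a t iht =>
    have ha : (a : ℕ) < n := h a (by simp [toList_of_mul])
    obtain ⟨t', ht'⟩ := iht (fun b hb => h b (by simp [toList_of_mul]; tauto))
    refine ⟨of ⟨(a : ℕ), ha⟩ * t', ?_⟩
    rw [map_mul, FreeMonoid.map_of, ht',
      show Fin.castSucc ⟨(a : ℕ), ha⟩ = a from Fin.ext rfl]

lemma Sub_iff_range {x : PosBraid (n+1)} : Sub x ↔ ∃ x₀, incl n x₀ = x := by
  constructor
  · intro hs
    obtain ⟨w, hw⟩ := exists_rep x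
    obtain ⟨w', hw'⟩ := word_lift w (fun a ha => hs a (by rw [← hw, suppE_q]; simpa using ha))
    exact ⟨q n w', by rw [incl_q, hw', hw]⟩
  · rintro ⟨x₀, rfl⟩
    induction x₀ using Con.induction_on with | H a =>
    intro i hi
    rw [show incl n ((a : (braidCon n).Quotient)) = q (n+1) (FreeMonoid.map Fin.castSucc a)
      from rfl, suppE_q] at hi
    simp only [toList_fm_map, List.mem_toFinset, List.mem_map] at hi
    obtain ⟨b, _, rfl⟩ := hi
    simpa using b.isLt

lemma map_cs_inj : Function.Injective (FreeMonoid.map Fin.castSucc : FM n → FM (n+1)) := by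
  intro a b h
  apply toList.injective
  have := congrArg toList h
  rw [toList_fm_map, toList_fm_map] at this
  exact List.map_injective_iff.mpr (Fin.castSucc_injective n) this

lemma step_descend {a b : FM (n+1)} (h : Step (n+1) a b) (a' : FM n)
    (ha : FreeMonoid.map Fin.castSucc a' = a) :
    ∃ b', FreeMonoid.map Fin.castSucc b' = b ∧ Step n a' b' := by
  obtain ⟨u, v, r1, r2, hr, rfl, rfl⟩ := h
  have hlt : ∀ x ∈ toList (u * r1 * v), (x : ℕ) < n := by
    intro x hx
    rw [← ha] at hx
    rw [toList_fm_map] at hx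
    obtain ⟨c, _, rfl⟩ := List.mem_map.mp hx
    simpa using c.isLt
  simp only [toList_mul, List.mem_append] at hlt
  obtain ⟨u', hu'⟩ := word_lift u (fun c hc => hlt c (Or.inl (Or.inl hc)))
  obtain ⟨v', hv'⟩ := word_lift v (fun c hc => hlt c (Or.inr hc))
  have hr1 : ∀ c ∈ toList r1, (c : ℕ) < n := fun c hc => hlt c (Or.inl (Or.inr hc))
  -- lift the rule
  have : ∃ r1' r2' : FM n, FreeMonoid.map Fin.castSucc r1' = r1 ∧
      FreeMonoid.map Fin.castSucc r2' = r2 ∧ braidRel n r1' r2' := by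
    rcases hr with ⟨i, j, hij, rfl, rfl⟩ | ⟨i, j, hij, rfl, rfl⟩
    · have hi : (i : ℕ) < n := hr1 i (by simp [toList_mul])
      have hj : (j : ℕ) < n := hr1 j (by simp [toList_mul])
      have ci : (⟨(i : ℕ), hi⟩ : Fin n).castSucc = i := Fin.ext rfl
      have cj : (⟨(j : ℕ), hj⟩ : Fin n).castSucc = j := Fin.ext rfl
      refine ⟨of ⟨i, hi⟩ * of ⟨j, hj⟩, of ⟨j, hj⟩ * of ⟨i, hi⟩, ?_, ?_,
        Or.inl ⟨⟨i, hi⟩, ⟨j, hj⟩, hij, rfl, rfl⟩⟩ <;>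
      · simp only [map_mul, FreeMonoid.map_of, ci, cj]
    · have hi : (i : ℕ) < n := hr1 i (by simp [toList_mul])
      have hj : (j : ℕ) < n := hr1 j (by simp [toList_mul])
      have ci : (⟨(i : ℕ), hi⟩ : Fin n).castSucc = i := Fin.ext rfl
      have cj : (⟨(j : ℕ), hj⟩ : Fin n).castSucc = j := Fin.ext rfl
      refine ⟨of ⟨i, hi⟩ * of ⟨j, hj⟩ * of ⟨i, hi⟩, of ⟨j, hj⟩ * of ⟨i, hi⟩ * of ⟨j, hj⟩, ?_, ?_,
        Or.inr ⟨⟨i, hi⟩, ⟨j, hj⟩, hij, rfl, rfl⟩⟩ <;>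
      · simp only [map_mul, FreeMonoid.map_of, ci, cj]
  obtain ⟨r1', r2', h1, h2, hrel⟩ := this
  have ha' : a' = u' * r1' * v' := by
    apply map_cs_inj
    rw [ha, map_mul, map_mul, hu', hv', h1]
  exact ⟨u' * r2' * v', by rw [map_mul, map_mul, hu', hv', h2],
    ⟨u', v', r1', r2', hrel, ha', rfl⟩⟩

lemma incl_inj : Function.Injective (incl n) := by
  have desc : ∀ a b : FM (n+1), ReflTransGen (Step (n+1)) a b →
      ∀ a' : FM n, FreeMonoid.map Fin.castSucc a' = a →
      ∃ b', FreeMonoid.map Fin.castSucc b' = b ∧ ReflTransGen (Step n) a' b' := by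
    intro a b h
    induction h using Relation.ReflTransGen.head_induction_on with
    | refl => exact fun a' ha => ⟨a', ha, ReflTransGen.refl⟩
    | head h' _ IH =>
      intro a' ha
      obtain ⟨c', hc', hstep⟩ := step_descend h' a' ha
      obtain ⟨b', hb', hchain⟩ := IH c' hc'
      exact ⟨b', hb', ReflTransGen.head hstep hchain⟩
  intro x y h
  obtain ⟨w1, hw1⟩ := exists_rep x
  obtain ⟨w2, hw2⟩ := exists_rep y
  rw [← hw1, ← hw2, incl_q, incl_q, q_eq_iff] at h
  obtain ⟨b', hb', hchain⟩ := desc _ _ h w1 rfl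
  have : b' = w2 := map_cs_inj hb'
  subst this
  rw [← hw1, ← hw2]
  exact q_eq_iff.mpr hchain

end BraidAux
namespace BraidAux

open FreeMonoid Relation

variable {n : ℕ}

lemma suppE_one : suppE (1 : PosBraid (n+1)) = ∅ := rfl

lemma Sub_one : Sub (1 : PosBraid (n+1)) := by
  intro i hi
  rw [suppE_one] at hi
  exact absurd hi (Finset.notMem_empty i)

lemma Sub.mul {x y : PosBraid (n+1)} (hx : Sub x) (hy : Sub y) : Sub (x * y) := by
  intro i hi
  rw [suppE_mul] at hi
  rcases Finset.mem_union.mp hi with h | h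
  · exact hx i h
  · exact hy i h

lemma Sub.of_mul_left {x y : PosBraid (n+1)} (h : Sub (x * y)) : Sub x := by
  intro i hi
  exact h i (by rw [suppE_mul]; exact Finset.mem_union_left _ hi)

lemma Sub_sigma {i : Fin (n+1)} (h : (i : ℕ) < n) : Sub (sigma i) := by
  intro a ha
  rw [suppE_sigma] at ha
  rwa [Finset.mem_singleton.mp ha]

lemma braid1 {i j : Fin (n+1)} (h : Adj i j) :
    sigma i * (sigma j * sigma i) = sigma j * (sigma i * sigma j) := by
  rw [← mul_assoc, sigma_mul_braid h, mul_assoc]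

/-- key claim: the canonical tail is a greatest right divisor among `Sub` divisors -/
lemma claimC : ∀ (M : ℕ) (x y b z d : PosBraid (n+1)), elen x < M → x = y * b →
    OnlyTop y → Sub b → Sub d → x = z * d → ∃ e, b = e * d ∧ z = y * e := by
  intro M
  induction M using Nat.strong_induction_on with | _ M SIH =>
  intro x y b z d hM hx hOT hSb hSd hzd
  by_cases hd1 : d = 1
  · subst hd1
    refine ⟨b, (mul_one b).symm, ?_⟩
    rw [mul_one] at hzd
    rw [← hzd, hx]
  obtain ⟨d', i, hd', hid⟩ := exists_gen_right hd1
  have hin : (i : ℕ) < n := hSd i hid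
  have hSd' : Sub d' := by rw [hd'] at hSd; exact hSd.of_mul_left
  by_cases hb1 : b = 1
  · exfalso
    have hxy : x = y := by rw [hx, hb1, mul_one]
    have hy : y = (z * d') * sigma i := by rw [← hxy, hzd, hd', mul_assoc]
    have := hOT i _ hy
    omega
  obtain ⟨c, j, hc, hjb⟩ := exists_gen_right hb1
  have hjn : (j : ℕ) < n := hSb j hjb
  have hSc : Sub c := by rw [hc] at hSb; exact hSb.of_mul_left
  have heq : (z * d') * sigma i = (y * c) * sigma j := by
    rw [mul_assoc, ← hd', ← hzd, hx, hc, ← mul_assoc]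
  have e1 : elen x = elen (y * c) + 1 := by
    rw [hx, hc, ← mul_assoc, elen_mul, elen_sigma]
  have e2 : elen x = elen (z * d') + 1 := by
    rw [hzd, hd', ← mul_assoc, elen_mul, elen_sigma]
  rcases trichotomy i j with hij | Fij | Aij
  · -- i = j
    subst hij
    have hcancel : z * d' = y * c := sigma_cancel_right heq
    obtain ⟨e, hce, hze⟩ := SIH (elen x) hM (y * c) y c z d' (by omega) rfl hOT hSc hSd'
      hcancel.symm
    refine ⟨e, ?_, hze⟩
    rw [hc, hce, hd', mul_assoc]
  · -- Far i j
    obtain ⟨W, hW1, hW2⟩ := (keyR heq).2.1 Fij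
    obtain ⟨e, hce, hWe⟩ := SIH (elen x) hM (y * c) y c W (sigma i) (by omega) rfl hOT hSc
      (Sub_sigma hin) hW2
    obtain ⟨e', hee, hze⟩ := SIH (elen x) hM (z * d') y (e * sigma j) z d' (by omega)
      (by rw [hW1, hWe, mul_assoc])
      hOT ((Sub.of_mul_left (hce ▸ hSc : Sub (e * sigma i))).mul (Sub_sigma hjn)) hSd' rfl
    refine ⟨e', ?_, hze⟩
    rw [hc, hce, hd', mul_assoc, sigma_mul_comm Fij, ← mul_assoc, hee, mul_assoc]
  · -- Adj i j
    obtain ⟨W, hW1, hW2⟩ := (keyR heq).2.2 Aij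
    -- hW1 : z * d' = W * sigma i * sigma j, hW2 : y * c = W * sigma j * sigma i
    obtain ⟨e₁, hce1, hW3⟩ := SIH (elen x) hM (y * c) y c (W * sigma j) (sigma i) (by omega)
      rfl hOT hSc (Sub_sigma hin) hW2
    have hSe1 : Sub e₁ := Sub.of_mul_left (hce1 ▸ hSc : Sub (e₁ * sigma i))
    have e3 : elen (y * c) = elen (W * sigma j) + 1 := by
      rw [hW2, elen_mul, elen_sigma]
    obtain ⟨e₂, he1, hW4⟩ := SIH (elen x) hM (W * sigma j) y e₁ W (sigma j) (by omega)
      hW3 hOT hSe1 (Sub_sigma hjn) rfl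
    have hSe2 : Sub e₂ := Sub.of_mul_left (he1 ▸ hSe1 : Sub (e₂ * sigma j))
    obtain ⟨e₃, he2, hze⟩ := SIH (elen x) hM (z * d') y (e₂ * sigma i * sigma j) z d'
      (by omega) (by rw [hW1, hW4, mul_assoc, mul_assoc, mul_assoc])
      hOT ((hSe2.mul (Sub_sigma hin)).mul (Sub_sigma hjn)) hSd' rfl
    refine ⟨e₃, ?_, hze⟩
    -- b = c * sigma j = e₂ * sigma j * sigma i * sigma j = e₂ * sigma i * sigma j * sigma i
    --   = e₃ * d' * sigma i = e₃ * d
    rw [hc, hce1, he1, hd']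
    calc e₂ * sigma j * sigma i * sigma j
        = e₂ * (sigma j * (sigma i * sigma j)) := by simp only [mul_assoc]
      _ = e₂ * (sigma i * (sigma j * sigma i)) := by rw [braid1 Aij.symm]
      _ = e₂ * sigma i * sigma j * sigma i := by simp only [mul_assoc]
      _ = e₃ * d' * sigma i := by rw [he2]
      _ = e₃ * (d' * sigma i) := by rw [mul_assoc]

lemma headDec : ∀ (M : ℕ) (x : PosBraid (n+1)), elen x < M →
    ∃ y b, x = y * b ∧ OnlyTop y ∧ Sub b := by
  intro M
  induction M using Nat.strong_induction_on with | _ M SIH =>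
  intro x hM
  by_cases h : ∃ (i : Fin (n+1)) (z : PosBraid (n+1)), (i : ℕ) < n ∧ x = z * sigma i
  · obtain ⟨i, z, hi, hz⟩ := h
    have hlt : elen z < elen x := by rw [hz, elen_mul, elen_sigma]; omega
    obtain ⟨y, b, h1, h2, h3⟩ := SIH (elen x) hM z hlt
    exact ⟨y, b * sigma i, by rw [hz, h1, mul_assoc], h2, h3.mul (Sub_sigma hi)⟩
  · refine ⟨x, 1, (mul_one x).symm, ?_, Sub_one⟩
    intro i z hz
    rcases Nat.lt_or_ge (i : ℕ) n with hi | hi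
    · exact absurd ⟨i, z, hi, hz⟩ h
    · have := i.isLt; omega

lemma headUnique {x y b y' b' : PosBraid (n+1)} (h1 : x = y * b) (h2 : x = y' * b')
    (hy : OnlyTop y) (hy' : OnlyTop y') (hb : Sub b) (hb' : Sub b') : y = y' ∧ b = b' := by
  obtain ⟨e, he1, he2⟩ := claimC (elen x + 1) x y b y' b' (by omega) h1 hy hb hb' h2
  obtain ⟨e', hf1, _⟩ := claimC (elen x + 1) x y' b' y b (by omega) h2 hy' hb' hb h1
  have hz : elen e = 0 := by
    have a1 := congrArg elen he1
    have a2 := congrArg elen hf1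
    rw [elen_mul] at a1 a2
    omega
  have he : e = 1 := eq_one_of_elen_zero hz
  subst he
  rw [one_mul] at he1
  exact ⟨by rw [he2, mul_one], he1⟩

end BraidAux
namespace BraidAux

open FreeMonoid Relation

variable {N n : ℕ}

lemma elen_flip_iter (m : ℕ) (x : PosBraid N) : elen ((⇑(flipH N))^[m] x) = elen x := by
  induction m with
  | zero => rfl
  | succ m ih => rw [Function.iterate_succ_apply', elen_flip, ih]

lemma prodFlip_concat (s : List (PosBraid N)) (a : PosBraid N) :
    prodFlip (⇑(flipH N)) (s ++ [a]) = flipH N (prodFlip (⇑(flipH N)) s) * a := by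
  induction s with
  | nil =>
    show (⇑(flipH N))^[0] a * prodFlip (⇑(flipH N)) [] = flipH N (prodFlip (⇑(flipH N)) []) * a
    show a * 1 = flipH N 1 * a
    rw [map_one, mul_one, one_mul]
  | cons c t ih =>
    show (⇑(flipH N))^[(t ++ [a]).length] c * prodFlip (⇑(flipH N)) (t ++ [a]) = _
    rw [ih, List.length_append, List.length_singleton]
    show (⇑(flipH N))^[t.length + 1] c * _ =
      flipH N ((⇑(flipH N))^[t.length] c * prodFlip (⇑(flipH N)) t) * a
    rw [map_mul, ← Function.iterate_succ_apply' (⇑(flipH N)), mul_assoc]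

lemma isSplit_ne_one {x : PosBraid (n+1)} {l : List (PosBraid n)}
    (hs : IsSplit x l) (hne : l ≠ []) : x ≠ 1 := by
  cases l with
  | nil => exact absurd rfl hne
  | cons h t =>
    obtain ⟨h1, h2, _⟩ := hs
    intro hx1
    apply h2
    have hel : elen x = elen h + elen (prodFlip (⇑(flipH (n+1))) (t.map (incl n))) := by
      rw [h1]
      show elen ((⇑(flipH (n+1)))^[(t.map (incl n)).length] (incl n h) *
        prodFlip (⇑(flipH (n+1))) (t.map (incl n))) = _
      rw [elen_mul, elen_flip_iter, elen_incl]
    rw [hx1, elen_one] at hel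
    have : elen h = 0 := by omega
    rw [List.head?_cons, eq_one_of_elen_zero this]

lemma onlyBot_one : OnlyBot (1 : PosBraid (n+1)) := by
  intro i z h
  have := congrArg elen h
  rw [elen_one, elen_mul, elen_sigma] at this
  omega

open Classical in
noncomputable def tb (x : PosBraid (n+1)) : ℕ :=
  if ∃ (i : Fin (n+1)) (z : PosBraid (n+1)), (i : ℕ) < n ∧ x = z * sigma i then 0 else 1

lemma split_exists (hn : 0 < n) :
    ∀ (M : ℕ) (x : PosBraid (n+1)), 2 * elen x + tb x < M →
    ∃ l : List (PosBraid n), IsSplit x l := by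
  intro M
  induction M using Nat.strong_induction_on with | _ M SIH =>
  intro x hM
  by_cases hx1 : x = 1
  · subst hx1
    refine ⟨[], rfl, by simp, ?_⟩
    intro j hj1 hj2
    rw [List.length_nil] at hj2
    omega
  · obtain ⟨y, b, hxyb, hOT, hSb⟩ := headDec (elen x + 1) x (by omega)
    obtain ⟨b₀, hb₀⟩ := Sub_iff_range.mp hSb
    have hyY : flipH (n+1) (flipH (n+1) y) = y := flip_flip y
    have hmeas : 2 * elen (flipH (n+1) y) + tb (flipH (n+1) y) < 2 * elen x + tb x := by
      have hEY : elen (flipH (n+1) y) = elen y := elen_flip y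
      have hEx : elen x = elen y + elen b := by rw [hxyb, elen_mul]
      by_cases hb1 : b = 1
      · have hyx : y = x := by rw [hxyb, hb1, mul_one]
        have htx : tb x = 1 := by
          rw [tb, if_neg]
          rintro ⟨i, z, hi, hz⟩
          have := hOT i z (by rw [hyx]; exact hz)
          omega
        have hty : tb (flipH (n+1) y) = 0 := by
          obtain ⟨z, i, hzi, -⟩ := exists_gen_right (show y ≠ 1 by rw [hyx]; exact hx1)
          have hiv := hOT i z hzi
          rw [tb, if_pos]
          refine ⟨i.rev, flipH (n+1) z, ?_, ?_⟩
          · simp only [Fin.val_rev]; omega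
          · exact flip_div hzi
        have heb : elen b = 0 := by rw [hb1]; rfl
        omega
      · have hbn : elen b ≠ 0 := fun h0 => hb1 (eq_one_of_elen_zero h0)
        have hty : tb (flipH (n+1) y) ≤ 1 := by rw [tb]; split <;> omega
        omega
    obtain ⟨lY, hsY⟩ := SIH (2 * elen x + tb x) hM (flipH (n+1) y) hmeas
    have hYne : lY ≠ [] → flipH (n+1) y ≠ 1 := fun hne => isSplit_ne_one hsY hne
    obtain ⟨hY1, hY2, hY3⟩ := hsY
    refine ⟨lY ++ [b₀], ?_, ?_, ?_⟩
    · rw [List.map_append, List.map_singleton, prodFlip_concat, ← hY1, hyY, hb₀]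
      exact hxyb
    · cases lY with
      | nil =>
        have hy1 : y = 1 := by
          rw [← hyY]
          rw [show flipH (n+1) y = prodFlip (⇑(flipH (n+1))) (List.map (incl n) []) from hY1]
          exact map_one _
        simp only [List.nil_append, List.head?_cons, ne_eq, Option.some.injEq]
        intro hcon
        apply hx1
        rw [hxyb, hy1, one_mul, ← hb₀, hcon, map_one]
      | cons h t =>
        simp only [List.cons_append, List.head?_cons]
        simpa using hY2
    · intro j hj1 hj2
      rw [List.length_append, List.length_singleton] at hj2
      rcases Nat.lt_or_ge j lY.length with hjl | hjl
      · have htake : (lY ++ [b₀]).take j = lY.take j :=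
          List.take_append_of_le_length (le_of_lt hjl)
        rw [htake]
        exact hY3 j hj1 hjl
      · have hje : j = lY.length := by omega
        subst hje
        have htake : (lY ++ [b₀]).take lY.length = lY := by
          rw [List.take_append_of_le_length (le_refl _), List.take_length]
        rw [htake, ← hY1]
        have hlYne : lY ≠ [] := by
          intro hnil
          rw [hnil] at hj1
          simp at hj1
        have hyne : y ≠ 1 := by
          intro hy1
          exact hYne hlYne (by rw [hy1, map_one])
        obtain ⟨z, i, hzi, -⟩ := exists_gen_right hyne
        have hiv := hOT i z hzi
        have hrev : i.rev = (⟨0, Nat.succ_pos n⟩ : Fin (n+1)) := by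
          apply Fin.ext
          simp only [Fin.val_rev]
          omega
        constructor
        · refine ⟨flipH (n+1) z, ?_⟩
          rw [flip_div hzi, hrev]
        · intro i' ⟨z', hz'⟩
          have := OnlyBot_flip hOT i' z' hz'
          exact Fin.ext this

lemma split_unique : ∀ (L : ℕ) (x : PosBraid (n+1)) (l l' : List (PosBraid n)),
    l.length < L → IsSplit x l → IsSplit x l' → l = l' := by
  intro L
  induction L using Nat.strong_induction_on with | _ L SIH =>
  intro x l l' hL hs hs'
  rcases List.eq_nil_or_concat l with rfl | ⟨t, a, hta⟩
  · rcases List.eq_nil_or_concat l' with rfl | ⟨t', a', hta'⟩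
    · rfl
    · exfalso
      rw [List.concat_eq_append] at hta'
      have hx1 : x = 1 := hs.1
      exact isSplit_ne_one hs' (by rw [hta']; simp) hx1
  · rw [List.concat_eq_append] at hta
    subst hta
    rcases List.eq_nil_or_concat l' with rfl | ⟨t', a', hta'⟩
    · exfalso
      have hx1 : x = 1 := hs'.1
      exact isSplit_ne_one hs (by simp) hx1
    rw [List.concat_eq_append] at hta'
    subst hta'
    obtain ⟨h1, h2, h3⟩ := hs
    obtain ⟨h1', h2', h3'⟩ := hs'
    have hx : x = flipH (n+1) (prodFlip (⇑(flipH (n+1))) (t.map (incl n))) * incl n a := by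
      rw [h1, List.map_append, List.map_singleton, prodFlip_concat]
    have hx' : x = flipH (n+1) (prodFlip (⇑(flipH (n+1))) (t'.map (incl n))) * incl n a' := by
      rw [h1', List.map_append, List.map_singleton, prodFlip_concat]
    have hOB : OnlyBot (prodFlip (⇑(flipH (n+1))) (t.map (incl n))) := by
      cases t with
      | nil => exact onlyBot_one
      | cons h t₀ =>
        intro i z hz
        have hcond := h3 (t₀.length + 1) (by omega)
          (by rw [List.length_append, List.length_cons, List.length_singleton]; omega)
        rw [show ((h :: t₀) ++ [a]).take (t₀.length + 1) = h :: t₀ by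
          rw [← List.length_cons (a := h) (as := t₀), List.take_append_of_le_length (le_refl _),
            List.take_length]] at hcond
        have := hcond.2 i ⟨z, hz⟩
        rw [this]
    have hOB' : OnlyBot (prodFlip (⇑(flipH (n+1))) (t'.map (incl n))) := by
      cases t' with
      | nil => exact onlyBot_one
      | cons h t₀ =>
        intro i z hz
        have hcond := h3' (t₀.length + 1) (by omega)
          (by rw [List.length_append, List.length_cons, List.length_singleton]; omega)
        rw [show ((h :: t₀) ++ [a']).take (t₀.length + 1) = h :: t₀ by
          rw [← List.length_cons (a := h) (as := t₀), List.take_append_of_le_length (le_refl _),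
            List.take_length]] at hcond
        have := hcond.2 i ⟨z, hz⟩
        rw [this]
    obtain ⟨hYY, haa⟩ := headUnique hx hx' (OnlyTop_flip hOB) (OnlyTop_flip hOB')
      (Sub_iff_range.mpr ⟨a, rfl⟩) (Sub_iff_range.mpr ⟨a', rfl⟩)
    have hYeq : prodFlip (⇑(flipH (n+1))) (t.map (incl n)) =
        prodFlip (⇑(flipH (n+1))) (t'.map (incl n)) := flip_inj hYY
    have haeq : a = a' := incl_inj haa
    have hsY : IsSplit (prodFlip (⇑(flipH (n+1))) (t.map (incl n))) t := by
      refine ⟨rfl, ?_, ?_⟩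
      · cases t with
        | nil => simp
        | cons h t₀ =>
          simp only [List.head?_cons]
          simpa using h2
      · intro j hj1 hj2
        have hcond := h3 j hj1 (by rw [List.length_append, List.length_singleton]; omega)
        rwa [List.take_append_of_le_length (le_of_lt hj2)] at hcond
    have hsY' : IsSplit (prodFlip (⇑(flipH (n+1))) (t.map (incl n))) t' := by
      rw [hYeq]
      refine ⟨rfl, ?_, ?_⟩
      · cases t' with
        | nil => simp
        | cons h t₀ =>
          simp only [List.head?_cons]
          simpa using h2'
      · intro j hj1 hj2
        have hcond := h3' j hj1 (by rw [List.length_append, List.length_singleton]; omega)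
        rwa [List.take_append_of_le_length (le_of_lt hj2)] at hcond
    have htt : t = t' := by
      apply SIH (t.length + 1)
        (by rw [List.length_append, List.length_singleton] at hL; omega)
        (prodFlip (⇑(flipH (n+1))) (t.map (incl n))) t t' (by omega) hsY hsY'
    rw [htt, haeq]

end BraidAux


/-- in `B_n⁺` (`n = k+3 ≥ 3`), every positive braid `x` admits a unique
decomposition `x = Φ_n^{p-1}(x_p) ⋯ Φ_n(x_2) · x_1` with `x_1, …, x_p ∈ B_{n-1}⁺`,
`x_p ≠ 1`, such that for each `r ≥ 2` the only generator `σ_i` right-dividing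
`Φ_n^{p-r}(x_p) ⋯ Φ_n(x_{r+1}) · x_r` is `σ_1`. -/
theorem existsUnique_phi_splitting (k : ℕ) (x : PosBraid (k + 2)) :
    ∃! l : List (PosBraid (k + 1)), IsSplit x l := by
  obtain ⟨l, hl⟩ := BraidAux.split_exists (n := k + 1) (Nat.succ_pos k)
    (2 * BraidAux.elen x + BraidAux.tb x + 1) x (by omega)
  exact ⟨l, hl, fun l' hl' =>
    BraidAux.split_unique (l'.length + 1) x l' l (by omega) hl' hl⟩
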